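/- Let (A, ∨, ⊙, ⊤, ⊥) be a commutative idempotent semiring whose induced lattice (with x ∧ y := x ⊙ y) is complete. Then the expansion with x ∧ y := x ⊙ y and x → y := ⋁{z | x ⊙ z ≤ y} is a Heyting algebra, i.e., an idempotent commutative bounded divisible residuated lattice. -/
import Mathlib


theorem stmt9
    {A : Type*} [CompleteLattice A]
    (mul : A → A → A)
    (hmc : ∀ x y : A, mul x y = mul y x)
    (hma : ∀ x y z : A, mul (mul x y) z = mul x (mul y z))
    (hmi : ∀ x : A, mul x x = x)
    (hmt : ∀ x : A, mul x ⊤ = x)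
    (hmb : ∀ x : A, mul x ⊥ = ⊥)
    (hdist : ∀ (x : A) (S : Set A), mul x (sSup S) = sSup ((fun s => mul x s) '' S)) :
    -- the expansion with meet := mul and imp x y := sSup {z | mul x z ≤ y}
    -- is a Heyting algebra (idempotent DRL)
    (∀ x y : A, mul x y = x ⊓ y) ∧
    (∀ x y z : A, mul x z ≤ y ↔ z ≤ sSup {z : A | mul x z ≤ y}) ∧
    (∀ x y : A, mul x y = mul x (sSup {z : A | mul x z ≤ y})) ∧
    (∀ x : A, mul x x = x) := by
  -- monotonicity in the second argument
  have hmono : ∀ x {a b : A}, a ≤ b → mul x a ≤ mul x b := by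
    intro x a b hab
    have h := hdist x {a, b}
    have hs : sSup ({a, b} : Set A) = b := by
      simp [sSup_pair, sup_eq_right.mpr hab]
    rw [hs] at h
    rw [h]
    exact le_sSup ⟨a, Or.inl rfl, rfl⟩
  have hmono' : ∀ {a b : A} (y : A), a ≤ b → mul a y ≤ mul b y := by
    intro a b y hab
    rw [hmc a y, hmc b y]; exact hmono y hab
  have hinf : ∀ x y : A, mul x y = x ⊓ y := by
    intro x y
    apply le_antisymm
    · refine le_inf ?_ ?_
      · calc mul x y ≤ mul x ⊤ := hmono x le_top
          _ = x := hmt x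
      · calc mul x y ≤ mul ⊤ y := hmono' y le_top
          _ = y := by rw [hmc, hmt]
    · calc x ⊓ y = mul (x ⊓ y) (x ⊓ y) := (hmi _).symm
        _ ≤ mul x (x ⊓ y) := hmono' _ inf_le_left
        _ ≤ mul x y := hmono x inf_le_right
  have hres : ∀ x y z : A, mul x z ≤ y ↔ z ≤ sSup {z : A | mul x z ≤ y} := by
    intro x y z
    constructor
    · intro h; exact le_sSup h
    · intro h
      calc mul x z ≤ mul x (sSup {z : A | mul x z ≤ y}) := hmono x h
        _ = sSup ((fun s => mul x s) '' {z : A | mul x z ≤ y}) := hdist x _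
        _ ≤ y := by
          apply sSup_le
          rintro w ⟨s, hs, rfl⟩
          exact hs
  refine ⟨hinf, hres, ?_, hmi⟩
  intro x y
  apply le_antisymm
  · apply hmono x
    apply le_sSup
    show mul x y ≤ y
    rw [hinf]; exact inf_le_right
  · have h1 : mul x (sSup {z : A | mul x z ≤ y}) ≤ y := (hres x y _).mpr le_rfl
    have h2 : mul x (sSup {z : A | mul x z ≤ y}) ≤ x := by
      calc mul x (sSup {z : A | mul x z ≤ y}) ≤ mul x ⊤ := hmono x le_top
        _ = x := hmt x
    rw [hinf x y]; exact le_inf h2 h1
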